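/- Let h_1, …, h_T and v_1, …, v_T be vectors in ℝ^d, let μ > 0, and let F_1, …, F_T be real symmetric d×d matrices such that each F_t − μ·I is positive semidefinite. Then each F_t is invertible and ((1/T) Σ_{t=1}^T ‖h_t − F_t^{−1} v_t‖)² ≤ (2/T) Σ_{t=1}^T ‖h_t − v_t‖² + (2(1 + 1/μ)²/T) Σ_{t=1}^T ‖v_t‖². -/

import Mathlib

open scoped BigOperators
open Matrix

section aux
variable {d : ℕ} {μ : ℝ}

private lemma quant_aux (A : Matrix (Fin d) (Fin d) ℝ)
    (hpsd : (A - μ • (1 : Matrix (Fin d) (Fin d) ℝ)).PosSemidef) (x : Fin d → ℝ) :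
    μ * (x ⬝ᵥ x) ≤ x ⬝ᵥ (A *ᵥ x) := by
  have h0 := hpsd.dotProduct_mulVec_nonneg x
  simp only [Matrix.sub_mulVec, Matrix.smul_mulVec, Matrix.one_mulVec,
    dotProduct_sub, dotProduct_smul, star_trivial, smul_eq_mul] at h0
  linarith

private lemma posdef_aux (hμ : 0 < μ) (A : Matrix (Fin d) (Fin d) ℝ) (hsymm : A.IsSymm)
    (hpsd : (A - μ • (1 : Matrix (Fin d) (Fin d) ℝ)).PosSemidef) : A.PosDef := by
  refine Matrix.PosDef.of_dotProduct_mulVec_pos ?_ fun x hx => ?_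
  · rw [Matrix.IsHermitian, Matrix.conjTranspose_eq_transpose_of_trivial]; exact hsymm
  have h1 : 0 < x ⬝ᵥ x := by
    simpa [star_trivial] using Matrix.dotProduct_star_self_pos_iff.mpr hx
  have := quant_aux A hpsd x
  simp only [star_trivial]
  nlinarith

private lemma inv_bound_aux (hμ : 0 < μ) (A : Matrix (Fin d) (Fin d) ℝ) (hsymm : A.IsSymm)
    (hpsd : (A - μ • (1 : Matrix (Fin d) (Fin d) ℝ)).PosSemidef)
    (v : EuclideanSpace ℝ (Fin d)) :
    ‖Matrix.toEuclideanLin A⁻¹ v‖ ≤ (1 / μ) * ‖v‖ := by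
  have hpd := posdef_aux hμ A hsymm hpsd
  set W : EuclideanSpace ℝ (Fin d) := Matrix.toEuclideanLin A⁻¹ v with hW
  have hAW : A *ᵥ (WithLp.equiv 2 _ W) = WithLp.equiv 2 _ v := by
    rw [hW]; show A *ᵥ (A⁻¹ *ᵥ WithLp.equiv 2 _ v) = _
    rw [Matrix.mulVec_mulVec,
      Matrix.mul_nonsing_inv _ (isUnit_iff_ne_zero.mpr hpd.det_pos.ne'), Matrix.one_mulVec]
  have hinner : (inner ℝ W v : ℝ) = (WithLp.equiv 2 _ W) ⬝ᵥ (A *ᵥ WithLp.equiv 2 _ W) := by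
    rw [hAW, EuclideanSpace.inner_eq_star_dotProduct, star_trivial]; exact dotProduct_comm _ _
  have hq := quant_aux A hpsd (WithLp.equiv 2 _ W)
  have hnormW : ((WithLp.equiv 2 _) W) ⬝ᵥ ((WithLp.equiv 2 _) W) = ‖W‖ ^ 2 := by
    rw [← real_inner_self_eq_norm_sq, EuclideanSpace.inner_eq_star_dotProduct, star_trivial]; rfl
  have hcs : (inner ℝ W v : ℝ) ≤ ‖W‖ * ‖v‖ := real_inner_le_norm W v
  have key : μ * ‖W‖ ^ 2 ≤ ‖W‖ * ‖v‖ := by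
    rw [← hnormW]; rw [hinner] at hcs; linarith
  rcases eq_or_lt_of_le (norm_nonneg W) with h0 | h0
  · rw [← h0]; positivity
  · rw [div_mul_eq_mul_div, le_div_iff₀ hμ]
    nlinarith
end aux

/-- Natural-gradient direction error bound used in the proof of Theorem 1: if each
symmetric matrix `F t` satisfies `F t − μ I ⪰ 0` with `μ > 0`, then each `F t` is
invertible and
`((1/T) ∑_t ‖h t − (F t)⁻¹ v t‖)² ≤ (2/T) ∑_t ‖h t − v t‖² + (2(1+1/μ)²/T) ∑_t ‖v t‖²`. -/
theorem stmt_12 (d T : ℕ) (h v : Fin T → EuclideanSpace ℝ (Fin d))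
    (μ : ℝ) (hμ : 0 < μ)
    (F : Fin T → Matrix (Fin d) (Fin d) ℝ)
    (hsymm : ∀ t, (F t).IsSymm)
    (hpsd : ∀ t, (F t - μ • (1 : Matrix (Fin d) (Fin d) ℝ)).PosSemidef) :
    (∀ t, IsUnit (F t)) ∧
      ((1 / T : ℝ) * ∑ t, ‖h t - Matrix.toEuclideanLin (F t)⁻¹ (v t)‖) ^ 2
        ≤ (2 / T) * ∑ t, ‖h t - v t‖ ^ 2
          + (2 * (1 + 1 / μ) ^ 2 / T) * ∑ t, ‖v t‖ ^ 2 := by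
  refine ⟨fun t => (posdef_aux hμ (F t) (hsymm t) (hpsd t)).isUnit, ?_⟩
  set a : Fin T → ℝ := fun t => ‖h t - Matrix.toEuclideanLin (F t)⁻¹ (v t)‖ with ha
  have hbound : ∀ t, a t ≤ ‖h t - v t‖ + (1 + 1 / μ) * ‖v t‖ := by
    intro t
    have h1 := inv_bound_aux hμ (F t) (hsymm t) (hpsd t) (v t)
    calc a t = ‖(h t - v t) + (v t - Matrix.toEuclideanLin (F t)⁻¹ (v t))‖ := by
          rw [ha]; simp [sub_add_sub_cancel]
      _ ≤ ‖h t - v t‖ + ‖v t - Matrix.toEuclideanLin (F t)⁻¹ (v t)‖ := norm_add_le _ _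
      _ ≤ ‖h t - v t‖ + (‖v t‖ + ‖Matrix.toEuclideanLin (F t)⁻¹ (v t)‖) := by
          gcongr; exact norm_sub_le _ _
      _ ≤ ‖h t - v t‖ + (‖v t‖ + (1 / μ) * ‖v t‖) := by gcongr
      _ = ‖h t - v t‖ + (1 + 1 / μ) * ‖v t‖ := by ring
  rcases Nat.eq_zero_or_pos T with hT | hT
  · subst hT; simp
  have hTpos : (0 : ℝ) < T := Nat.cast_pos.mpr hT
  have h2 : (∑ t, a t) ^ 2 ≤ (T : ℝ) * ∑ t, a t ^ 2 := by
    simpa using sq_sum_le_card_mul_sum_sq (s := Finset.univ) (f := a)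
  have h3 : ∀ t, a t ^ 2 ≤ 2 * ‖h t - v t‖ ^ 2 + 2 * (1 + 1 / μ) ^ 2 * ‖v t‖ ^ 2 := by
    intro t
    have hb := hbound t
    have h0 : (0 : ℝ) ≤ a t := norm_nonneg _
    nlinarith [sq_nonneg (‖h t - v t‖ - (1 + 1 / μ) * ‖v t‖)]
  have h4 : ∑ t, a t ^ 2
      ≤ 2 * ∑ t, ‖h t - v t‖ ^ 2 + 2 * (1 + 1 / μ) ^ 2 * ∑ t, ‖v t‖ ^ 2 := by
    calc ∑ t, a t ^ 2
        ≤ ∑ t, (2 * ‖h t - v t‖ ^ 2 + 2 * (1 + 1 / μ) ^ 2 * ‖v t‖ ^ 2) :=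
          Finset.sum_le_sum fun t _ => h3 t
      _ = _ := by rw [Finset.sum_add_distrib, ← Finset.mul_sum, ← Finset.mul_sum]
  calc ((1 / T : ℝ) * ∑ t, a t) ^ 2 = (∑ t, a t) ^ 2 / (T : ℝ) ^ 2 := by
        rw [mul_pow]; ring
    _ ≤ ((T : ℝ) * ∑ t, a t ^ 2) / (T : ℝ) ^ 2 := by gcongr
    _ = (∑ t, a t ^ 2) / T := by field_simp
    _ ≤ (2 * ∑ t, ‖h t - v t‖ ^ 2 + 2 * (1 + 1 / μ) ^ 2 * ∑ t, ‖v t‖ ^ 2) / T := by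
        gcongr
    _ = (2 / T) * ∑ t, ‖h t - v t‖ ^ 2
          + (2 * (1 + 1 / μ) ^ 2 / T) * ∑ t, ‖v t‖ ^ 2 := by ring
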